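/- Let Λ ⊆ ℝⁿ be a lattice with successive minima λ₁ ≤ λ₂ ≤ … ≤ λₙ with respect to the closed unit ball centered at the origin. Then there exists a ℤ-basis v₁, …, vₙ of Λ such that ‖vᵢ‖ ≤ i · λᵢ for every i = 1, …, n. -/

import Mathlib

open MeasureTheory

/-- The `i`-th successive minimum of a set `Λ ⊆ ℝⁿ` with respect to the
closed unit ball centered at the origin: the infimum of radii `r > 0` such that the closed
ball of radius `r` contains `i + 1` linearly independent elements of `Λ`. -/
noncomputable def succMin (n : ℕ) (Λ : Set (EuclideanSpace ℝ (Fin n))) (i : Fin n) : ℝ :=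
  sInf {r : ℝ | 0 < r ∧ ∃ w : Fin ((i : ℕ) + 1) → EuclideanSpace ℝ (Fin n),
    (∀ k, w k ∈ Λ) ∧ LinearIndependent ℝ w ∧ ∀ k, ‖w k‖ ≤ r}

open Submodule

section Aux

theorem aux_range_snoc {α : Type*} {k : ℕ} (v : Fin k → α) (x : α) :
    Set.range (Fin.snoc v x : Fin (k + 1) → α) = insert x (Set.range v) := by
  ext y
  simp only [Set.mem_range, Set.mem_insert_iff]
  constructor
  · rintro ⟨j, rfl⟩
    induction j using Fin.lastCases with
    | last => left; simp
    | cast i => right; exact ⟨i, by simp⟩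
  · rintro (rfl | ⟨i, rfl⟩)
    · exact ⟨Fin.last k, by simp⟩
    · exact ⟨i.castSucc, by simp⟩

theorem aux_zr_inj : Function.Injective fun r : ℤ => r • (1 : ℝ) := by
  intro a b h
  simpa using h

theorem aux_li_real {E : Type*} [NormedAddCommGroup E] [NormedSpace ℝ E]
    [FiniteDimensional ℝ E] (Λ : Submodule ℤ E) [DiscreteTopology Λ] {m : ℕ} {x : Fin m → E}
    (hx : ∀ j, x j ∈ Λ) (hli : LinearIndependent ℤ x) : LinearIndependent ℝ x := by
  haveI : ProperSpace E := FiniteDimensional.proper ℝ E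
  set Λ' : Submodule ℤ E := span ℤ (Set.range x) with hΛ'
  have hsub : (Λ' : Set E) ⊆ (Λ : Set E) := by
    rw [hΛ']
    exact span_le.mpr (Set.range_subset_iff.mpr hx)
  haveI : DiscreteTopology Λ' :=
    DiscreteTopology.of_subset (inferInstance : DiscreteTopology Λ) hsub
  set V : Submodule ℝ E := span ℝ (Λ' : Set E) with hV
  set f : V →ₗ[ℝ] E := V.subtype with hf
  set L₀ : Submodule ℤ V := Λ'.comap (f.restrictScalars ℤ) with hL₀
  have h_img : f '' L₀ = Λ' := by
    rw [← LinearMap.coe_restrictScalars ℤ f, ← Submodule.map_coe (f.restrictScalars ℤ),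
      Submodule.map_comap_eq_self]
    exact fun y hy ↦ LinearMap.mem_range.mpr ⟨⟨y, Submodule.subset_span hy⟩, rfl⟩
  haveI : DiscreteTopology L₀ := by
    refine DiscreteTopology.preimage_of_continuous_injective (Λ' : Set E) ?_ (injective_subtype _)
    exact LinearMap.continuous_of_finiteDimensional f
  haveI : IsZLattice ℝ L₀ := ⟨by
    rw [← (Submodule.map_injective_of_injective (injective_subtype V)).eq_iff, Submodule.map_span,
      Submodule.map_top, range_subtype, h_img]⟩
  haveI : Module.Finite ℤ L₀ := ZLattice.module_finite ℝ L₀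
  have hrank : Module.finrank ℤ L₀ = Module.finrank ℝ V := ZLattice.rank ℝ L₀
  have hxmem : ∀ j, x j ∈ Λ' := fun j => subset_span (Set.mem_range_self j)
  set x' : Fin m → L₀ := fun j => ⟨⟨x j, subset_span (hxmem j)⟩, hxmem j⟩ with hx'
  have hli' : LinearIndependent ℤ x' := by
    have heq : x = (f.restrictScalars ℤ ∘ₗ L₀.subtype) ∘ x' := rfl
    rw [heq] at hli
    exact LinearIndependent.of_comp _ hli
  have hcard : m ≤ Module.finrank ℝ V := by
    simpa [hrank] using hli'.fintype_card_le_finrank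
  have hVeq : V = span ℝ (Set.range x) := by
    rw [hV, hΛ', span_span_of_tower]
  rw [linearIndependent_iff_card_eq_finrank_span]
  refine le_antisymm ?_ ?_
  · rw [hVeq] at hcard
    simpa [Set.finrank] using hcard
  · simpa using finrank_range_le_card x

end Aux

section PhaseA

def SMset (n : ℕ) (Λ : Set (EuclideanSpace ℝ (Fin n))) (i : Fin n) : Set ℝ :=
  {r : ℝ | 0 < r ∧ ∃ w : Fin ((i : ℕ) + 1) → EuclideanSpace ℝ (Fin n),
    (∀ k, w k ∈ Λ) ∧ LinearIndependent ℝ w ∧ ∀ k, ‖w k‖ ≤ r}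

theorem succMin_eq (n : ℕ) (Λ : Set (EuclideanSpace ℝ (Fin n))) (i : Fin n) :
    succMin n Λ i = sInf (SMset n Λ i) := rfl

variable {n : ℕ} (v : Module.Basis (Fin n) ℝ (EuclideanSpace ℝ (Fin n)))

theorem SMset_nonempty (i : Fin n) :
    (SMset n (span ℤ (Set.range v) : Set (EuclideanSpace ℝ (Fin n))) i).Nonempty := by
  refine ⟨1 + ∑ j, ‖v j‖, ⟨by positivity, v ∘ Fin.castLE i.2, ?_, ?_, ?_⟩⟩
  · exact fun k => subset_span (Set.mem_range_self _)
  · exact v.linearIndependent.comp _ (Fin.castLE_injective _)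
  · intro k
    have h1 : ‖v (Fin.castLE i.2 k)‖ ≤ ∑ j, ‖v j‖ :=
      Finset.single_le_sum (fun j _ => norm_nonneg (v j)) (Finset.mem_univ _)
    simp only [Function.comp_apply]
    linarith

theorem SMset_bddBelow (n : ℕ) (Λ : Set (EuclideanSpace ℝ (Fin n))) (i : Fin n) :
    BddBelow (SMset n Λ i) := ⟨0, fun r hr => hr.1.le⟩

theorem succMin_nonneg (i : Fin n) :
    0 ≤ succMin n (span ℤ (Set.range v) : Set (EuclideanSpace ℝ (Fin n))) i :=
  le_csInf (SMset_nonempty v i) (fun r hr => hr.1.le)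

theorem SMset_anti (Λ : Set (EuclideanSpace ℝ (Fin n))) {i i' : Fin n} (h : i ≤ i') :
    SMset n Λ i' ⊆ SMset n Λ i := by
  rintro r ⟨hr, w, hw1, hw2, hw3⟩
  refine ⟨hr, w ∘ Fin.castLE (by omega : (i : ℕ) + 1 ≤ (i' : ℕ) + 1), fun k => hw1 _,
    hw2.comp _ (Fin.castLE_injective _), fun k => hw3 _⟩

theorem succMin_mono {i i' : Fin n} (h : i ≤ i') :
    succMin n (span ℤ (Set.range v) : Set (EuclideanSpace ℝ (Fin n))) i ≤
      succMin n (span ℤ (Set.range v) : Set (EuclideanSpace ℝ (Fin n))) i' :=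
  csInf_le_csInf (SMset_bddBelow n _ i) (SMset_nonempty v i') (SMset_anti _ h)

theorem succMin_attained (i : Fin n) :
    ∃ u : Fin ((i : ℕ) + 1) → EuclideanSpace ℝ (Fin n),
      (∀ k, u k ∈ span ℤ (Set.range v)) ∧ LinearIndependent ℝ u ∧
      ∀ k, ‖u k‖ ≤ succMin n (span ℤ (Set.range v) : Set (EuclideanSpace ℝ (Fin n))) i := by
  classical
  set E := EuclideanSpace ℝ (Fin n)
  set Λ : Submodule ℤ E := span ℤ (Set.range v) with hΛ
  set lam := succMin n (Λ : Set E) i with hlam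
  set S := SMset n (Λ : Set E) i with hS
  have hSne := SMset_nonempty v i
  have hbdd := SMset_bddBelow n (Λ : Set E) i
  have hlam0 : 0 ≤ lam := succMin_nonneg v i
  have hF : (Metric.closedBall (0 : E) (lam + 1) ∩ (Λ : Set E)).Finite := by
    change (_ ∩ (Λ.toAddSubgroup : Set E)).Finite
    have : DiscreteTopology Λ.toAddSubgroup := (inferInstance : DiscreteTopology Λ)
    exact Metric.finite_isBounded_inter_isClosed DiscreteTopology.isDiscrete Metric.isBounded_closedBall inferInstance
  set T : Set (Fin ((i : ℕ) + 1) → E) :=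
    {w | (∀ k, w k ∈ Metric.closedBall (0 : E) (lam + 1) ∩ (Λ : Set E)) ∧
      LinearIndependent ℝ w} with hT
  have hTfin : T.Finite := by
    refine Set.Finite.subset (Set.Finite.pi (fun _ => hF)) ?_
    intro w hw
    simp only [Set.mem_pi, Set.mem_univ, forall_true_left]
    exact hw.1
  have hmemT : ∀ r ∈ S, r ≤ lam + 1 →
      ∀ w : Fin ((i : ℕ) + 1) → E, (∀ k, w k ∈ Λ) → LinearIndependent ℝ w →
      (∀ k, ‖w k‖ ≤ r) → w ∈ T := by
    intro r _ hrle w hw1 hw2 hw3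
    exact ⟨fun k => ⟨Metric.mem_closedBall.mpr (by
      rw [dist_zero_right]; exact (hw3 k).trans hrle), hw1 k⟩, hw2⟩
  have hlamS : lam = sInf S := rfl
  have hTne : T.Nonempty := by
    obtain ⟨r, hr, hrlt⟩ := exists_lt_of_csInf_lt hSne
      (by rw [← hlamS]; linarith : sInf S < lam + 1)
    obtain ⟨hrpos, w, hw1, hw2, hw3⟩ := hr
    exact ⟨w, hmemT r ⟨hrpos, w, hw1, hw2, hw3⟩ hrlt.le w hw1 hw2 hw3⟩
  set m : (Fin ((i : ℕ) + 1) → E) → ℝ :=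
    fun w => Finset.univ.sup' Finset.univ_nonempty (fun k => ‖w k‖) with hm
  obtain ⟨u, huT, humin⟩ := Set.exists_min_image T m hTfin hTne
  have hmu : m u ≤ lam := by
    by_contra hcon
    push_neg at hcon
    set ε : ℝ := min (m u - lam) 1 with hε
    have hεpos : 0 < ε := lt_min (by linarith) one_pos
    obtain ⟨r, hr, hrlt⟩ := exists_lt_of_csInf_lt hSne
      (by rw [← hlamS]; linarith : sInf S < lam + ε)
    obtain ⟨hrpos, w, hw1, hw2, hw3⟩ := hr
    have hrle : r ≤ lam + 1 := by
      have : ε ≤ 1 := min_le_right _ _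
      linarith
    have hwT : w ∈ T := hmemT r ⟨hrpos, w, hw1, hw2, hw3⟩ hrle w hw1 hw2 hw3
    have h1 : m u ≤ m w := humin w hwT
    have h2 : m w ≤ r := Finset.sup'_le _ _ (fun k _ => hw3 k)
    have h3 : ε ≤ m u - lam := min_le_left _ _
    linarith
  refine ⟨u, fun k => (huT.1 k).2, huT.2, fun k => ?_⟩
  calc ‖u k‖ ≤ m u := by
        rw [hm]; exact Finset.le_sup' (fun k => ‖u k‖) (Finset.mem_univ k)
  _ ≤ lam := hmu

theorem exists_indep_attaining :
    ∃ u : Fin n → EuclideanSpace ℝ (Fin n),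
      (∀ j, u j ∈ span ℤ (Set.range v)) ∧ LinearIndependent ℝ u ∧
      ∀ j, ‖u j‖ ≤ succMin n (span ℤ (Set.range v) : Set (EuclideanSpace ℝ (Fin n))) j := by
  have key : ∀ k : ℕ, ∀ hk : k ≤ n, ∃ u : Fin k → EuclideanSpace ℝ (Fin n),
      (∀ j, u j ∈ span ℤ (Set.range v)) ∧ LinearIndependent ℝ u ∧
      ∀ j : Fin k, ‖u j‖ ≤ succMin n (span ℤ (Set.range v) : Set (EuclideanSpace ℝ (Fin n)))
        ⟨j, lt_of_lt_of_le j.2 hk⟩ := by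
    intro k
    induction k with
    | zero =>
      intro hk
      exact ⟨finZeroElim, fun j => j.elim0, linearIndependent_empty_type, fun j => j.elim0⟩
    | succ k ih =>
      intro hk
      have hkn : k < n := hk
      obtain ⟨u, hu1, hu2, hu3⟩ := ih (le_of_lt hkn)
      obtain ⟨z, hz1, hz2, hz3⟩ := succMin_attained v ⟨k, hkn⟩
      have hex : ∃ j₀, z j₀ ∉ span ℝ (Set.range u) := by
        by_contra hcon
        push_neg at hcon
        have h1 : span ℝ (Set.range z) ≤ span ℝ (Set.range u) :=
          span_le.mpr (Set.range_subset_iff.mpr hcon)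
        have h2 : Module.finrank ℝ (span ℝ (Set.range z)) = k + 1 := by
          simpa using finrank_span_eq_card hz2
        have h3 : Module.finrank ℝ (span ℝ (Set.range u)) ≤ k := by
          simpa [Set.finrank] using finrank_range_le_card u
        have h4 := Submodule.finrank_mono h1
        omega
      obtain ⟨j₀, hj₀⟩ := hex
      refine ⟨Fin.snoc u (z j₀), ?_, ?_, ?_⟩
      · intro j
        induction j using Fin.lastCases with
        | last => simpa using hz1 j₀
        | cast i => simpa using hu1 i
      · exact linearIndependent_fin_snoc.mpr ⟨hu2, hj₀⟩
      · intro j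
        induction j using Fin.lastCases with
        | last => simpa using hz3 j₀
        | cast i => simpa using hu3 i
  obtain ⟨u, h1, h2, h3⟩ := key n le_rfl
  exact ⟨u, h1, h2, fun j => by simpa using h3 j⟩

end PhaseA

set_option maxHeartbeats 2000000 in
theorem stmt6 (n : ℕ) (v : Module.Basis (Fin n) ℝ (EuclideanSpace ℝ (Fin n))) :
    ∃ w : Fin n → EuclideanSpace ℝ (Fin n),
      (∀ i, w i ∈ Submodule.span ℤ (Set.range v)) ∧
      LinearIndependent ℤ w ∧
      Submodule.span ℤ (Set.range w) = Submodule.span ℤ (Set.range v) ∧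
      ∀ i : Fin n, ‖w i‖ ≤ ((i : ℕ) + 1) *
        succMin n (Submodule.span ℤ (Set.range v) : Set (EuclideanSpace ℝ (Fin n))) i := by
  classical
  obtain ⟨u, hu1, hu2, hu3⟩ := exists_indep_attaining v
  haveI hdisc : DiscreteTopology
      (span ℤ (Set.range v) : Submodule ℤ (EuclideanSpace ℝ (Fin n))) := inferInstance
  set Λ : Submodule ℤ (EuclideanSpace ℝ (Fin n)) := span ℤ (Set.range v) with hΛ
  set lam : Fin n → ℝ := succMin n (Λ : Set (EuclideanSpace ℝ (Fin n))) with hlam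
  have hlam0 : ∀ j, 0 ≤ lam j := fun j => succMin_nonneg v j
  have hlammono : ∀ {j j' : Fin n}, j ≤ j' → lam j ≤ lam j' := fun h => succMin_mono v h
  have hspan : span ℝ (Set.range u) = ⊤ := by
    apply Submodule.eq_top_of_finrank_eq
    rw [finrank_euclideanSpace_fin]
    simpa using finrank_span_eq_card hu2
  set B : Module.Basis (Fin n) ℝ (EuclideanSpace ℝ (Fin n)) := Module.Basis.mk hu2 hspan.ge with hBdef
  have hB : ∀ j, B j = u j := fun j => by rw [hBdef]; simp
  have hBΛ : ∀ j, B j ∈ Λ := fun j => by rw [hB]; exact hu1 j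
  have hBnorm : ∀ j, ‖B j‖ ≤ lam j := fun j => by rw [hB]; exact hu3 j
  set R : ℕ → Submodule ℝ (EuclideanSpace ℝ (Fin n)) :=
    fun m => span ℝ (B '' {j : Fin n | (j : ℕ) < m}) with hR
  set M : ℕ → Submodule ℤ (EuclideanSpace ℝ (Fin n)) :=
    fun m => Λ ⊓ (R m).restrictScalars ℤ with hM
  have hMR : ∀ m y, y ∈ M m ↔ y ∈ Λ ∧ y ∈ R m := by
    intro m y
    simp only [hM, Submodule.mem_inf, Submodule.restrictScalars_mem]
  have hRmem : ∀ (m : ℕ) (y : EuclideanSpace ℝ (Fin n)),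
      y ∈ R m ↔ ∀ j : Fin n, m ≤ (j : ℕ) → B.repr y j = 0 := by
    intro m y
    simp only [hR]
    rw [Module.Basis.mem_span_image]
    constructor
    · intro h j hj
      by_contra h0
      have h1 : j ∈ (B.repr y).support := Finsupp.mem_support_iff.mpr h0
      have h2 := h h1
      simp only [Set.mem_setOf_eq] at h2
      omega
    · intro h j hj
      simp only [Finset.mem_coe, Finsupp.mem_support_iff] at hj
      simp only [Set.mem_setOf_eq]
      by_contra hlt
      exact hj (h j (by omega))
  have hRmono : ∀ {m m' : ℕ}, m ≤ m' → R m ≤ R m' := by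
    intro m m' h
    simp only [hR]
    exact span_mono (Set.image_mono (fun j hj => lt_of_lt_of_le hj h))
  have hMmono : ∀ {m m' : ℕ}, m ≤ m' → M m ≤ M m' := by
    intro m m' h y hy
    rw [hMR] at hy ⊢
    exact ⟨hy.1, hRmono h hy.2⟩
  have hBR : ∀ (m : ℕ) (j : Fin n), (j : ℕ) < m → B j ∈ R m := by
    intro m j hj
    simp only [hR]
    exact subset_span ⟨j, hj, rfl⟩
  have hBnotR : ∀ (m : ℕ) (j : Fin n), m ≤ (j : ℕ) → B j ∉ R m := by
    intro m j hj hmem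
    have := (hRmem m _).mp hmem j hj
    simp [Module.Basis.repr_self] at this
  -- main induction
  have main : ∀ k : ℕ, ∀ hk : k ≤ n, ∃ w : Fin k → EuclideanSpace ℝ (Fin n),
      (∀ j, w j ∈ Λ) ∧ LinearIndependent ℝ w ∧ span ℤ (Set.range w) = M k ∧
      ∀ j : Fin k, ‖w j‖ ≤ ((j : ℕ) + 1) * lam ⟨j, lt_of_lt_of_le j.2 hk⟩ := by
    intro k
    induction k with
    | zero =>
      intro hk
      refine ⟨finZeroElim, fun j => j.elim0, linearIndependent_empty_type, ?_, fun j => j.elim0⟩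
      have h0 : {j : Fin n | (j : ℕ) < 0} = (∅ : Set (Fin n)) := by
        ext j; simp
      have hR0 : R 0 = ⊥ := by
        simp only [hR, h0, Set.image_empty, span_empty]
      have hM0 : M 0 = ⊥ := by
        rw [hM]
        simp only [hR0]
        simp
      rw [hM0]
      have : Set.range (finZeroElim : Fin 0 → EuclideanSpace ℝ (Fin n)) = ∅ :=
        Set.range_eq_empty _
      rw [this, span_empty]
    | succ k ih =>
      intro hk
      have hkn : k < n := hk
      obtain ⟨w, hw1, hw2, hw3, hw4⟩ := ih (le_of_lt hkn)
      set kk : Fin n := ⟨k, hkn⟩ with hkk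
      have hwM : ∀ j, w j ∈ M k := fun j => hw3 ▸ subset_span (Set.mem_range_self j)
      have hwR : ∀ j, w j ∈ R k := fun j => ((hMR k _).mp (hwM j)).2
      set N : Submodule ℤ (EuclideanSpace ℝ (Fin n)) := M (k+1) with hN
      have hNsubΛ : (N : Set (EuclideanSpace ℝ (Fin n))) ⊆ (Λ : Set _) := by
        intro y hy
        exact ((hMR (k+1) y).mp hy).1
      haveI hNdisc : DiscreteTopology N :=
        DiscreteTopology.of_subset (inferInstance : DiscreteTopology Λ) hNsubΛ
      haveI : Module.Finite ℤ N := inferInstance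
      set N₀ : Submodule ℤ N := (M k).comap N.subtype with hN₀
      have hmemN₀ : ∀ y : N, y ∈ N₀ ↔ (y : EuclideanSpace ℝ (Fin n)) ∈ M k := by
        intro y
        simp only [hN₀, Submodule.mem_comap, Submodule.coe_subtype]
      haveI : NoZeroSMulDivisors ℤ (N ⧸ N₀) := by
        refine ⟨fun {c q} hcq => ?_⟩
        rcases eq_or_ne c 0 with rfl | hc
        · exact Or.inl rfl
        right
        obtain ⟨y, rfl⟩ := Submodule.Quotient.mk_surjective N₀ q
        rw [← Submodule.Quotient.mk_smul, Submodule.Quotient.mk_eq_zero, hmemN₀] at hcq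
        rw [Submodule.Quotient.mk_eq_zero, hmemN₀, hMR]
        have hy1 : (y : EuclideanSpace ℝ (Fin n)) ∈ Λ := hNsubΛ y.2
        have hy2 : ((c • y : N) : EuclideanSpace ℝ (Fin n)) ∈ R k := ((hMR _ _).mp hcq).2
        have hy3 : (c : ℝ) • (y : EuclideanSpace ℝ (Fin n)) ∈ R k := by
          rw [Int.cast_smul_eq_zsmul]
          exact hy2
        have hyR : (y : EuclideanSpace ℝ (Fin n)) ∈ R k := by
          rwa [Submodule.smul_mem_iff _ (show (c : ℝ) ≠ 0 by exact_mod_cast hc)] at hy3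
        exact ⟨hy1, hyR⟩
      haveI : Module.Finite ℤ (N ⧸ N₀) := inferInstance
      haveI : Module.Free ℤ (N ⧸ N₀) := inferInstance
      set cb : Module.Basis (Module.Free.ChooseBasisIndex ℤ (N ⧸ N₀)) ℤ (N ⧸ N₀) :=
        Module.Free.chooseBasis ℤ (N ⧸ N₀) with hcb
      have hukN : B kk ∈ N := by
        rw [hN, hMR]
        exact ⟨hBΛ kk, hBR (k+1) kk (by simp [hkk])⟩
      have hukRk : B kk ∉ R k := hBnotR k kk (by simp [hkk])
      have hukN₀ : (⟨B kk, hukN⟩ : N) ∉ N₀ := by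
        rw [hmemN₀, hMR]
        intro hmem
        exact hukRk hmem.2
      have hQnt : (Submodule.Quotient.mk (⟨B kk, hukN⟩ : N) : N ⧸ N₀) ≠ 0 := by
        rw [Ne, Submodule.Quotient.mk_eq_zero]
        exact hukN₀
      -- two-element independent sets in the quotient are impossible
      have hcard_le : Fintype.card (Module.Free.ChooseBasisIndex ℤ (N ⧸ N₀)) ≤ 1 := by
        by_contra hcard
        push_neg at hcard
        obtain ⟨i₁, i₂, hne⟩ := Fintype.exists_pair_of_one_lt_card hcard
        obtain ⟨y₁, hy₁⟩ := Submodule.Quotient.mk_surjective N₀ (cb i₁)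
        obtain ⟨y₂, hy₂⟩ := Submodule.Quotient.mk_surjective N₀ (cb i₂)
        have hzero : ∀ s t : ℤ, s • (y₁ : EuclideanSpace ℝ (Fin n)) +
            t • (y₂ : EuclideanSpace ℝ (Fin n)) = 0 → s = 0 ∧ t = 0 := by
          intro s t hst
          have hstN : s • y₁ + t • y₂ = (0 : N) := by
            apply Subtype.ext
            push_cast
            exact hst
          have hmk : s • cb i₁ + t • cb i₂ = (0 : N ⧸ N₀) := by
            rw [← hy₁, ← hy₂, ← Submodule.Quotient.mk_smul, ← Submodule.Quotient.mk_smul,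
              ← Submodule.Quotient.mk_add, hstN, Submodule.Quotient.mk_zero]
          have hrep := congrArg (fun z => cb.repr z) hmk
          simp only [map_add, _root_.map_smul, Module.Basis.repr_self, map_zero] at hrep
          constructor
          · have := congrArg (fun f => f i₁) hrep
            simpa [Finsupp.single_apply, hne, Ne.symm hne] using this
          · have := congrArg (fun f => f i₂) hrep
            simpa [Finsupp.single_apply, hne, Ne.symm hne] using this
        have hpair : LinearIndependent ℤ
            ![(y₁ : EuclideanSpace ℝ (Fin n)), (y₂ : EuclideanSpace ℝ (Fin n))] := by
          rw [LinearIndependent.pair_iff]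
          exact hzero
        have hwli : LinearIndependent ℤ w := hw2.restrict_scalars aux_zr_inj
        have hdisj : Disjoint (span ℤ (Set.range w))
            (span ℤ (Set.range ![(y₁ : EuclideanSpace ℝ (Fin n)),
              (y₂ : EuclideanSpace ℝ (Fin n))])) := by
          rw [Submodule.disjoint_def]
          intro z hz1 hz2
          have hrange : Set.range ![(y₁ : EuclideanSpace ℝ (Fin n)),
              (y₂ : EuclideanSpace ℝ (Fin n))] =
              {(y₁ : EuclideanSpace ℝ (Fin n)), (y₂ : EuclideanSpace ℝ (Fin n))} := by
            ext z
            constructor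
            · rintro ⟨j, rfl⟩
              fin_cases j
              · exact Or.inl rfl
              · exact Or.inr rfl
            · rintro (rfl | rfl)
              exacts [⟨0, rfl⟩, ⟨1, rfl⟩]
          rw [hrange, Submodule.mem_span_pair] at hz2
          obtain ⟨a, b, hab⟩ := hz2
          have hzMk : z ∈ M k := by rw [← hw3]; exact hz1
          have habN : a • y₁ + b • y₂ ∈ N₀ := by
            rw [hmemN₀]
            have : ((a • y₁ + b • y₂ : N) : EuclideanSpace ℝ (Fin n)) = z := by
              push_cast
              exact hab
            rw [this]
            exact hzMk
          have hmk0 : a • cb i₁ + b • cb i₂ = (0 : N ⧸ N₀) := by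
            rw [← hy₁, ← hy₂, ← Submodule.Quotient.mk_smul, ← Submodule.Quotient.mk_smul,
              ← Submodule.Quotient.mk_add, Submodule.Quotient.mk_eq_zero]
            exact habN
          have hrep := congrArg (fun z => cb.repr z) hmk0
          simp only [map_add, _root_.map_smul, Module.Basis.repr_self, map_zero] at hrep
          have ha : a = 0 := by
            have := congrArg (fun f => f i₁) hrep
            simpa [Finsupp.single_apply, hne, Ne.symm hne] using this
          have hb : b = 0 := by
            have := congrArg (fun f => f i₂) hrep
            simpa [Finsupp.single_apply, hne, Ne.symm hne] using this
          rw [ha, hb] at hab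
          simp at hab
          exact hab.symm
        have hg : LinearIndependent ℤ (Sum.elim w ![(y₁ : EuclideanSpace ℝ (Fin n)),
            (y₂ : EuclideanSpace ℝ (Fin n))]) := hwli.sum_type hpair hdisj
        have hgΛ : ∀ s, Sum.elim w ![(y₁ : EuclideanSpace ℝ (Fin n)),
            (y₂ : EuclideanSpace ℝ (Fin n))] s ∈ Λ := by
          rintro (j | j)
          · exact hw1 j
          · fin_cases j
            · exact hNsubΛ y₁.2
            · exact hNsubΛ y₂.2
        have hgreal : LinearIndependent ℝ (Sum.elim w ![(y₁ : EuclideanSpace ℝ (Fin n)),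
            (y₂ : EuclideanSpace ℝ (Fin n))]) := by
          have := aux_li_real Λ (x := fun s : Fin (k + 2) =>
            Sum.elim w ![(y₁ : EuclideanSpace ℝ (Fin n)),
              (y₂ : EuclideanSpace ℝ (Fin n))] ((finSumFinEquiv (m := k) (n := 2)).symm s))
            (fun s => hgΛ _) (hg.comp _ (Equiv.injective _))
          have h2 := this.comp (finSumFinEquiv (m := k) (n := 2))
            (Equiv.injective _)
          simpa [Function.comp_def] using h2
        have hgR : ∀ s, Sum.elim w ![(y₁ : EuclideanSpace ℝ (Fin n)),
            (y₂ : EuclideanSpace ℝ (Fin n))] s ∈ R (k+1) := by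
          rintro (j | j)
          · exact hRmono (by omega) (hwR j)
          · fin_cases j
            · exact ((hMR _ _).mp y₁.2).2
            · exact ((hMR _ _).mp y₂.2).2
        have hcard2 : Fintype.card (Fin k ⊕ Fin 2) ≤ Module.finrank ℝ (R (k+1)) := by
          have hli2 : LinearIndependent ℝ (fun s => (⟨Sum.elim w
              ![(y₁ : EuclideanSpace ℝ (Fin n)), (y₂ : EuclideanSpace ℝ (Fin n))] s,
              hgR s⟩ : R (k+1))) := by
            apply LinearIndependent.of_comp (R (k+1)).subtype
            exact hgreal
          exact hli2.fintype_card_le_finrank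
        have hfr : Module.finrank ℝ (R (k+1)) ≤ k + 1 := by
          have himg : B '' {j : Fin n | (j : ℕ) < k + 1} =
              Set.range (fun j : Fin (k+1) => B (Fin.castLE hk j)) := by
            ext y
            constructor
            · rintro ⟨j, hj, rfl⟩
              exact ⟨⟨(j : ℕ), hj⟩, by apply congrArg; exact Fin.ext rfl⟩
            · rintro ⟨j, rfl⟩
              exact ⟨Fin.castLE hk j, by simp; omega, rfl⟩
          have hReq : R (k+1) =
              span ℝ (Set.range (fun j : Fin (k+1) => B (Fin.castLE hk j))) := by
            rw [hR]
            show span ℝ (⇑B '' {j : Fin n | (j : ℕ) < k + 1}) = _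
            rw [himg]
          rw [hReq]
          simpa [Set.finrank] using finrank_range_le_card (R := ℝ) (fun j : Fin (k+1) => B (Fin.castLE hk j))
        rw [Fintype.card_sum, Fintype.card_fin, Fintype.card_fin] at hcard2
        omega
      haveI hne' : Nonempty (Module.Free.ChooseBasisIndex ℤ (N ⧸ N₀)) := by
        by_contra hemp
        rw [not_nonempty_iff] at hemp
        exact hQnt (cb.repr.injective (Subsingleton.elim _ _))
      have hcard1 : Fintype.card (Module.Free.ChooseBasisIndex ℤ (N ⧸ N₀)) = 1 :=
        le_antisymm hcard_le Fintype.card_pos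
      obtain ⟨i₀, hi₀⟩ := Fintype.card_eq_one_iff.mp hcard1
      obtain ⟨x, hx⟩ := Submodule.Quotient.mk_surjective N₀ (cb i₀)
      have hq1 : ∀ q : N ⧸ N₀, q = cb.repr q i₀ • cb i₀ := by
        intro q
        conv_lhs => rw [← cb.sum_repr q]
        rw [Fintype.sum_eq_single i₀ (fun j hj => absurd (hi₀ j) hj)]
      have hgen : ∀ y : N, ∃ d : ℤ, y - d • x ∈ N₀ := by
        intro y
        refine ⟨cb.repr (Submodule.Quotient.mk y) i₀, ?_⟩
        rw [← Submodule.Quotient.mk_eq_zero, Submodule.Quotient.mk_sub,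
          Submodule.Quotient.mk_smul, hx, ← hq1 (Submodule.Quotient.mk y), sub_self]
      obtain ⟨d₀, hd₀⟩ := hgen ⟨B kk, hukN⟩
      have hd₀ne : d₀ ≠ 0 := by
        rintro rfl
        simp only [zero_smul, sub_zero] at hd₀
        exact hukN₀ hd₀
      have hdE : B kk - d₀ • (x : EuclideanSpace ℝ (Fin n)) ∈ M k := by
        rw [hmemN₀] at hd₀
        have : ((⟨B kk, hukN⟩ - d₀ • x : N) : EuclideanSpace ℝ (Fin n)) =
            B kk - d₀ • (x : EuclideanSpace ℝ (Fin n)) := by push_cast; ring_nf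
        rwa [this] at hd₀
      have hxcoord : (d₀ : ℝ) * B.repr (x : EuclideanSpace ℝ (Fin n)) kk = 1 := by
        have h0 := (hRmem k _).mp ((hMR _ _).mp hdE).2 kk (le_refl k)
        rw [map_sub, Finsupp.sub_apply] at h0
        rw [show ((d₀ • (x : EuclideanSpace ℝ (Fin n)))) =
          (d₀ : ℝ) • (x : EuclideanSpace ℝ (Fin n)) from (Int.cast_smul_eq_zsmul ℝ d₀ _).symm,
          _root_.map_smul, Finsupp.smul_apply, Module.Basis.repr_self] at h0
        simp only [Finsupp.single_apply, smul_eq_mul] at h0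
        norm_num at h0
        linarith
      have hxk_le : |B.repr (x : EuclideanSpace ℝ (Fin n)) kk| ≤ 1 := by
        have h1 : (1 : ℝ) ≤ |(d₀ : ℝ)| := by
          rw [← Int.cast_abs]
          exact_mod_cast Int.one_le_abs hd₀ne
        have h2 : |(d₀ : ℝ)| * |B.repr (x : EuclideanSpace ℝ (Fin n)) kk| = 1 := by
          rw [← abs_mul, hxcoord, abs_one]
        nlinarith [abs_nonneg (B.repr (x : EuclideanSpace ℝ (Fin n)) kk)]
      have hxhigh : ∀ j : Fin n, k + 1 ≤ (j : ℕ) →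
          B.repr (x : EuclideanSpace ℝ (Fin n)) j = 0 := by
        intro j hj
        exact (hRmem (k+1) _).mp ((hMR _ _).mp x.2).2 j hj
      set t : Finset (Fin n) := Finset.univ.filter (fun j => (j : ℕ) < k) with ht
      set x' : EuclideanSpace ℝ (Fin n) := (x : EuclideanSpace ℝ (Fin n)) -
        ∑ j ∈ t, round (B.repr (x : EuclideanSpace ℝ (Fin n)) j) • B j with hx'def
      have htmem : ∀ j : Fin n, j ∈ t ↔ (j : ℕ) < k := by
        intro j
        simp [ht]
      have hadjM : ∑ j ∈ t, round (B.repr (x : EuclideanSpace ℝ (Fin n)) j) • B j ∈ M k := by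
        refine Submodule.sum_mem _ (fun j hj => Submodule.smul_mem _ _ ?_)
        rw [hMR]
        exact ⟨hBΛ j, hBR k j ((htmem j).mp hj)⟩
      have hx'coord : ∀ j : Fin n, B.repr x' j =
          B.repr (x : EuclideanSpace ℝ (Fin n)) j -
          (if j ∈ t then (round (B.repr (x : EuclideanSpace ℝ (Fin n)) j) : ℝ) else 0) := by
        intro j
        rw [hx'def, map_sub, Finsupp.sub_apply]
        congr 1
        have hsum : B.repr (∑ j' ∈ t, round (B.repr (x : EuclideanSpace ℝ (Fin n)) j') • B j') j
            = ∑ j' ∈ t, (if j' = j then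
              (round (B.repr (x : EuclideanSpace ℝ (Fin n)) j') : ℝ) else 0) := by
          rw [map_sum, Finsupp.finset_sum_apply]
          refine Finset.sum_congr rfl (fun j' _ => ?_)
          rw [show (round (B.repr (x : EuclideanSpace ℝ (Fin n)) j') • B j') =
            ((round (B.repr (x : EuclideanSpace ℝ (Fin n)) j') : ℝ)) • B j' from
            (Int.cast_smul_eq_zsmul ℝ _ _).symm, _root_.map_smul, Finsupp.smul_apply, Module.Basis.repr_self,
            Finsupp.single_apply, smul_eq_mul]
          split <;> simp
        rw [hsum, Finset.sum_ite_eq' t j]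
      have hx'lt : ∀ j : Fin n, (j : ℕ) < k → |B.repr x' j| ≤ 1/2 := by
        intro j hj
        rw [hx'coord, if_pos ((htmem j).mpr hj)]
        exact abs_sub_round _
      have hx'k : B.repr x' kk = B.repr (x : EuclideanSpace ℝ (Fin n)) kk := by
        rw [hx'coord, if_neg (by rw [htmem]; simp [hkk])]
        ring
      have hx'high : ∀ j : Fin n, k + 1 ≤ (j : ℕ) → B.repr x' j = 0 := by
        intro j hj
        rw [hx'coord, if_neg (by rw [htmem]; omega), hxhigh j hj]
        ring
      have hx'N : x' ∈ N := by
        rw [hx'def]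
        exact Submodule.sub_mem _ x.2 (hMmono (by omega) hadjM)
      have hx'Λ : x' ∈ Λ := hNsubΛ hx'N
      have hx'notRk : x' ∉ R k := by
        intro hmem
        have h0 := (hRmem k _).mp hmem kk (le_refl k)
        rw [hx'k] at h0
        rw [h0, mul_zero] at hxcoord
        norm_num at hxcoord
      have hx'gen : ∀ y : N, ∃ d : ℤ, (y : EuclideanSpace ℝ (Fin n)) - d • x' ∈ M k := by
        intro y
        obtain ⟨d, hd⟩ := hgen y
        rw [hmemN₀] at hd
        refine ⟨d, ?_⟩
        have h1 : ((y - d • x : N) : EuclideanSpace ℝ (Fin n)) =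
            (y : EuclideanSpace ℝ (Fin n)) - d • (x : EuclideanSpace ℝ (Fin n)) := by
          push_cast; ring_nf
        rw [h1] at hd
        have h2 : (y : EuclideanSpace ℝ (Fin n)) - d • x' =
            ((y : EuclideanSpace ℝ (Fin n)) - d • (x : EuclideanSpace ℝ (Fin n))) +
            d • (∑ j ∈ t, round (B.repr (x : EuclideanSpace ℝ (Fin n)) j) • B j) := by
          rw [hx'def, smul_sub]
          abel
        rw [h2]
        exact Submodule.add_mem _ hd (Submodule.smul_mem _ _ hadjM)
      -- norm bound
      have hnorm : ‖x'‖ ≤ ((k : ℝ) + 1) * lam kk := by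
        have hcardt : (t.card : ℝ) ≤ k := by
          have h1 : t.card ≤ (Finset.range k).card := by
            refine Finset.card_le_card_of_injOn (fun j => (j : ℕ)) ?_ ?_
            · intro j hj
              rw [Finset.mem_coe, Finset.mem_range]
              exact (htmem j).mp hj
            · intro a _ b _ hab
              exact Fin.ext hab
          rw [Finset.card_range] at h1
          exact_mod_cast h1
        have hterm1 : ∀ j ∈ t, |B.repr x' j| * ‖B j‖ ≤ (1/2) * lam kk := by
          intro j hj
          have hjk := (htmem j).mp hj
          have h1 : |B.repr x' j| ≤ 1/2 := hx'lt j hjk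
          have h2 : ‖B j‖ ≤ lam kk := (hBnorm j).trans (hlammono (by
            rw [Fin.le_def]; simp [hkk]; omega))
          have h3 : (0:ℝ) ≤ ‖B j‖ := norm_nonneg _
          have h4 := hlam0 kk
          nlinarith [abs_nonneg (B.repr x' j)]
        have hsum1 : ∑ j ∈ t, |B.repr x' j| * ‖B j‖ ≤ (k : ℝ) * ((1/2) * lam kk) := by
          calc ∑ j ∈ t, |B.repr x' j| * ‖B j‖ ≤ ∑ j ∈ t, (1/2) * lam kk :=
                Finset.sum_le_sum hterm1
          _ = (t.card : ℝ) * ((1/2) * lam kk) := by rw [Finset.sum_const, nsmul_eq_mul]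
          _ ≤ (k : ℝ) * ((1/2) * lam kk) := by
                have h4 := hlam0 kk
                nlinarith
        have hsum2 : ∑ j ∈ Finset.univ.filter (fun j : Fin n => ¬ ((j : ℕ) < k)),
            |B.repr x' j| * ‖B j‖ ≤ lam kk := by
          rw [Finset.sum_eq_single_of_mem kk (by simp [hkk])]
          · calc |B.repr x' kk| * ‖B kk‖ ≤ 1 * lam kk := by
                  have h2 : ‖B kk‖ ≤ lam kk := hBnorm kk
                  have h3 : |B.repr x' kk| ≤ 1 := by rw [hx'k]; exact hxk_le
                  have h4 := hlam0 kk
                  nlinarith [norm_nonneg (B kk), abs_nonneg (B.repr x' kk)]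
            _ = lam kk := one_mul _
          · intro j hj hjne
            have hjk : ¬ ((j : ℕ) < k) := (Finset.mem_filter.mp hj).2
            have hjge : k + 1 ≤ (j : ℕ) := by
              rcases Nat.lt_or_ge (j : ℕ) (k+1) with h | h
              · exfalso
                apply hjne
                apply Fin.ext
                simp only [hkk]
                omega
              · exact h
            rw [hx'high j hjge]
            simp
        calc ‖x'‖ = ‖∑ j, B.repr x' j • B j‖ := by rw [B.sum_repr x']
        _ ≤ ∑ j, ‖B.repr x' j • B j‖ := norm_sum_le _ _
        _ = ∑ j, |B.repr x' j| * ‖B j‖ := by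
              refine Finset.sum_congr rfl (fun j _ => ?_)
              rw [norm_smul, Real.norm_eq_abs]
        _ = ∑ j ∈ t, |B.repr x' j| * ‖B j‖ +
            ∑ j ∈ Finset.univ.filter (fun j : Fin n => ¬ ((j : ℕ) < k)),
              |B.repr x' j| * ‖B j‖ := by
              rw [ht]
              exact (Finset.sum_filter_add_sum_filter_not _ _ _).symm
        _ ≤ (k : ℝ) * ((1/2) * lam kk) + lam kk := add_le_add hsum1 hsum2
        _ ≤ ((k : ℝ) + 1) * lam kk := by
              have h4 := hlam0 kk
              nlinarith [Nat.cast_nonneg (α := ℝ) k]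
      -- assemble
      refine ⟨Fin.snoc w x', ?_, ?_, ?_, ?_⟩
      · intro j
        induction j using Fin.lastCases with
        | last => simpa using hx'Λ
        | cast i => simpa using hw1 i
      · refine linearIndependent_fin_snoc.mpr ⟨hw2, ?_⟩
        intro hmem
        exact hx'notRk (span_le.mpr (Set.range_subset_iff.mpr (fun j => hwR j)) hmem)
      · rw [aux_range_snoc, Submodule.span_insert]
        apply le_antisymm
        · refine sup_le ?_ ?_
          · rw [Submodule.span_singleton_le_iff_mem]
            exact hx'N
          · rw [hw3]
            exact hMmono (by omega)
        · intro y hy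
          obtain ⟨d, hd⟩ := hx'gen ⟨y, hy⟩
          have hyd : y = d • x' + (y - d • x') := by abel
          rw [hyd]
          refine Submodule.add_mem _ (Submodule.mem_sup_left
            (Submodule.mem_span_singleton.mpr ⟨d, rfl⟩)) (Submodule.mem_sup_right ?_)
          rw [hw3]
          exact hd
      · intro j
        induction j using Fin.lastCases with
        | last =>
          simp only [Fin.snoc_last, Fin.val_last]
          have : lam ⟨k, lt_of_lt_of_le (Fin.last k).2 hk⟩ = lam kk := rfl
          rw [this]
          exact_mod_cast hnorm
        | cast i =>
          simp only [Fin.snoc_castSucc, Fin.coe_castSucc]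
          exact hw4 i
  -- conclude
  have hRn : R n = ⊤ := by
    have huniv : {j : Fin n | (j : ℕ) < n} = Set.univ := by
      ext j; simp [j.2]
    simp only [hR, huniv, Set.image_univ, Module.Basis.span_eq]
  have hMn : M n = Λ := by
    rw [hM]
    simp only [hRn]
    simp
  obtain ⟨w, hw1, hw2, hw3, hw4⟩ := main n le_rfl
  refine ⟨w, hw1, hw2.restrict_scalars aux_zr_inj, by rw [hw3, hMn], fun i => hw4 i⟩
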